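/- Let V and W be vector spaces over ℂ, let G_V and G_W be bilinear forms on V and W respectively, and let f : V → W be a surjective linear map satisfying G_W(f v, f v') = G_V(v, v') for all v, v' ∈ V. Let I ⊆ T(V) be the two-sided ideal generated by {ι(v) : v ∈ ker f} together with the elements ι(v)ι(v') − ι(v')ι(v) − G_V(v,v')·1, and let J ⊆ T(W) be the two-sided ideal generated by the elements ι(w)ι(w') − ι(w')ι(w) − G_W(w,w')·1. Then the induced algebra homomorphism T(f) : T(V) → T(W) maps I onto J, the preimage of J under T(f) equals I, and T(f) descends to an algebra isomorphism T(V)/I ≅ T(W)/J. -/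
import Mathlib


/-- The algebra homomorphism `T(f) : T(V) → T(W)` on tensor algebras induced by a linear
map `f : V → W`; it is the unique unital algebra homomorphism with `T(f)(ι v) = ι (f v)`. -/
noncomputable def tensorAlgebraMap {V W : Type*}
    [AddCommGroup V] [Module ℂ V] [AddCommGroup W] [Module ℂ W] (f : V →ₗ[ℂ] W) :
    TensorAlgebra ℂ V →ₐ[ℂ] TensorAlgebra ℂ W :=
  TensorAlgebra.lift ℂ ((TensorAlgebra.ι ℂ).comp f)

/-- The CCR generators `ι v * ι v' - ι v' * ι v - G(v,v')·1`, `v, v' ∈ V`. -/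
def ccrSet {V : Type*} [AddCommGroup V] [Module ℂ V] (G : V →ₗ[ℂ] V →ₗ[ℂ] ℂ) :
    Set (TensorAlgebra ℂ V) :=
  {x | ∃ v w : V, x = TensorAlgebra.ι ℂ v * TensorAlgebra.ι ℂ w
    - TensorAlgebra.ι ℂ w * TensorAlgebra.ι ℂ v
    - algebraMap ℂ (TensorAlgebra ℂ V) (G v w)}

/-- Generating set of the ideal `I ⊆ T(V)`: the elements `ι v` for `v ∈ ker f` together
with the CCR elements for `G_V`. -/
def genSetI {V W : Type*} [AddCommGroup V] [Module ℂ V] [AddCommGroup W] [Module ℂ W]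
    (GV : V →ₗ[ℂ] V →ₗ[ℂ] ℂ) (f : V →ₗ[ℂ] W) : Set (TensorAlgebra ℂ V) :=
  (⇑(TensorAlgebra.ι ℂ) '' (LinearMap.ker f : Set V)) ∪ ccrSet GV

/-- The defining relation of the two-sided ideal `I`; `RingQuot` of it is `T(V)/I`. -/
def relI {V W : Type*} [AddCommGroup V] [Module ℂ V] [AddCommGroup W] [Module ℂ W]
    (GV : V →ₗ[ℂ] V →ₗ[ℂ] ℂ) (f : V →ₗ[ℂ] W) :
    TensorAlgebra ℂ V → TensorAlgebra ℂ V → Prop :=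
  fun a b => a - b ∈ genSetI GV f

/-- The defining relation of the two-sided ideal `J` generated by the CCR elements for
`G_W`; `RingQuot` of it is `T(W)/J`. -/
def relJ {W : Type*} [AddCommGroup W] [Module ℂ W] (GW : W →ₗ[ℂ] W →ₗ[ℂ] ℂ) :
    TensorAlgebra ℂ W → TensorAlgebra ℂ W → Prop :=
  fun a b => a - b ∈ ccrSet GW

theorem tensorAlgebraMap_ι {V W : Type*}
    [AddCommGroup V] [Module ℂ V] [AddCommGroup W] [Module ℂ W] (f : V →ₗ[ℂ] W) (v : V) :
    tensorAlgebraMap f (TensorAlgebra.ι ℂ v) = TensorAlgebra.ι ℂ (f v) := by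
  simp [tensorAlgebraMap]

theorem tensorAlgebraMap_ccr {V W : Type*}
    [AddCommGroup V] [Module ℂ V] [AddCommGroup W] [Module ℂ W] (f : V →ₗ[ℂ] W)
    (v w : V) (c : ℂ) :
    tensorAlgebraMap f (TensorAlgebra.ι ℂ v * TensorAlgebra.ι ℂ w
        - TensorAlgebra.ι ℂ w * TensorAlgebra.ι ℂ v - algebraMap ℂ (TensorAlgebra ℂ V) c)
      = TensorAlgebra.ι ℂ (f v) * TensorAlgebra.ι ℂ (f w)
        - TensorAlgebra.ι ℂ (f w) * TensorAlgebra.ι ℂ (f v)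
        - algebraMap ℂ (TensorAlgebra ℂ W) c := by
  simp [map_sub, map_mul, tensorAlgebraMap_ι, AlgHom.commutes]

/-- **Isomorphism of CCR quotients along a surjective symplectic map.**
Let `f : V → W` be a surjective linear map with `G_W(f v, f v') = G_V(v, v')`.  Let
`I ⊆ T(V)` be the two-sided ideal generated by `{ι v : v ∈ ker f}` and the CCR elements
for `G_V`, and `J ⊆ T(W)` the two-sided ideal generated by the CCR elements for `G_W`.
Then `T(f)` maps `I` onto `J`, the preimage of `J` under `T(f)` equals `I`, and `T(f)`
descends to an algebra isomorphism `T(V)/I ≃ T(W)/J`. -/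
theorem tensorAlgebraMap_ccr_quot_iso {V W : Type*}
    [AddCommGroup V] [Module ℂ V] [AddCommGroup W] [Module ℂ W]
    (GV : V →ₗ[ℂ] V →ₗ[ℂ] ℂ) (GW : W →ₗ[ℂ] W →ₗ[ℂ] ℂ)
    (f : V →ₗ[ℂ] W) (hf : Function.Surjective f)
    (hG : ∀ v v' : V, GW (f v) (f v') = GV v v') :
    ⇑(tensorAlgebraMap f) '' (TwoSidedIdeal.span (genSetI GV f) : Set (TensorAlgebra ℂ V))
      = (TwoSidedIdeal.span (ccrSet GW) : Set (TensorAlgebra ℂ W)) ∧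
    ⇑(tensorAlgebraMap f) ⁻¹' (TwoSidedIdeal.span (ccrSet GW) : Set (TensorAlgebra ℂ W))
      = (TwoSidedIdeal.span (genSetI GV f) : Set (TensorAlgebra ℂ V)) ∧
    ∃ e : RingQuot (relI GV f) ≃ₐ[ℂ] RingQuot (relJ GW),
      ∀ x : TensorAlgebra ℂ V,
        e (RingQuot.mkAlgHom ℂ (relI GV f) x)
          = RingQuot.mkAlgHom ℂ (relJ GW) (tensorAlgebraMap f x) := by
  classical
  obtain ⟨g, hg⟩ := f.exists_rightInverse_of_surjective (LinearMap.range_eq_top.2 hf)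
  have hgf : ∀ w : W, f (g w) = w := fun w => congrArg (· w) (congrArg DFunLike.coe hg)
  set Tf := tensorAlgebraMap f with hTf
  set Tg := tensorAlgebraMap g with hTg
  set I := TwoSidedIdeal.span (genSetI GV f) with hI
  set J := TwoSidedIdeal.span (ccrSet GW) with hJ
  -- generators of `I` map into `J`
  have hgen : ∀ x ∈ genSetI GV f, Tf x ∈ J := by
    rintro x (⟨v, hv, rfl⟩ | ⟨v, w, rfl⟩)
    · rw [tensorAlgebraMap_ι, LinearMap.mem_ker.mp hv, map_zero]
      exact J.zero_mem
    · rw [tensorAlgebraMap_ccr]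
      rw [← hG v w]
      exact TwoSidedIdeal.subset_span ⟨f v, f w, rfl⟩
  -- `T(f)` maps `I` into `J`
  have h1 : ∀ x ∈ I, Tf x ∈ J := by
    intro x hx
    have hx' := TwoSidedIdeal.mem_span_iff.mp hx (TwoSidedIdeal.comap Tf J)
      (fun y hy => by rw [SetLike.mem_coe, TwoSidedIdeal.mem_comap]; exact hgen y hy)
    rwa [TwoSidedIdeal.mem_comap] at hx'
  -- generators of `J` pull back into `I` along the section `g`
  have hgenJ : ∀ y ∈ ccrSet GW, Tg y ∈ I := by
    rintro y ⟨w, w', rfl⟩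
    rw [tensorAlgebraMap_ccr]
    have : GW w w' = GV (g w) (g w') := by rw [← hG (g w) (g w'), hgf, hgf]
    rw [this]
    exact TwoSidedIdeal.subset_span (Or.inr ⟨g w, g w', rfl⟩)
  have h2 : ∀ y ∈ J, Tg y ∈ I := by
    intro y hy
    have hy' := TwoSidedIdeal.mem_span_iff.mp hy (TwoSidedIdeal.comap Tg I)
      (fun z hz => by rw [SetLike.mem_coe, TwoSidedIdeal.mem_comap]; exact hgenJ z hz)
    rwa [TwoSidedIdeal.mem_comap] at hy'
  -- `x - T(g)(T(f) x) ∈ I` for all `x`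
  have h3 : ∀ x : TensorAlgebra ℂ V, x - Tg (Tf x) ∈ I := by
    intro x
    induction x using TensorAlgebra.induction with
    | algebraMap r => rw [AlgHom.commutes, AlgHom.commutes, sub_self]; exact I.zero_mem
    | ι v =>
        rw [tensorAlgebraMap_ι, tensorAlgebraMap_ι, ← map_sub]
        refine TwoSidedIdeal.subset_span (Or.inl ⟨v - g (f v), ?_, rfl⟩)
        rw [SetLike.mem_coe, LinearMap.mem_ker, map_sub, hgf, sub_self]
    | mul a b ha hb =>
        have : a * b - Tg (Tf (a * b))
            = a * (b - Tg (Tf b)) + (a - Tg (Tf a)) * (Tg (Tf b)) := by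
          rw [map_mul, map_mul]; noncomm_ring
        rw [this]
        exact I.add_mem (I.mul_mem_left _ _ hb) (I.mul_mem_right _ _ ha)
    | add a b ha hb =>
        have : a + b - Tg (Tf (a + b)) = (a - Tg (Tf a)) + (b - Tg (Tf b)) := by
          rw [map_add, map_add]; noncomm_ring
        rw [this]
        exact I.add_mem ha hb
  -- `T(f) ∘ T(g) = id`
  have hTfTg : ∀ y : TensorAlgebra ℂ W, Tf (Tg y) = y := by
    have : Tf.comp Tg = AlgHom.id ℂ (TensorAlgebra ℂ W) := by
      apply TensorAlgebra.hom_ext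
      apply LinearMap.ext
      intro w
      simp [Tf, Tg, tensorAlgebraMap_ι, hgf]
    intro y
    exact congrArg (· y) (congrArg DFunLike.coe this)
  refine ⟨?_, ?_, ?_⟩
  · ext y
    constructor
    · rintro ⟨x, hx, rfl⟩; exact h1 x hx
    · intro hy; exact ⟨Tg y, h2 y hy, hTfTg y⟩
  · ext x
    simp only [Set.mem_preimage]
    constructor
    · intro hx
      have hx1 := h2 _ hx
      have hx2 := h3 x
      have hm : (x - Tg (Tf x)) + Tg (Tf x) ∈ I := I.add_mem hx2 hx1
      simpa using hm
    · intro hx; exact h1 x hx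
  -- the isomorphism of quotients
  · have hφrel : ∀ ⦃a b : TensorAlgebra ℂ V⦄, relI GV f a b →
        (RingQuot.mkAlgHom ℂ (relJ GW)).comp Tf a
          = (RingQuot.mkAlgHom ℂ (relJ GW)).comp Tf b := by
      intro a b hab
      rcases hab with (⟨v, hv, hv'⟩ | ⟨v, w, hvw⟩)
      · have : Tf a - Tf b = 0 := by
          rw [← map_sub, ← hv', tensorAlgebraMap_ι, LinearMap.mem_ker.mp hv, map_zero]
        simp only [AlgHom.comp_apply]
        rw [sub_eq_zero] at this
        rw [this]
      · have : Tf a - Tf b ∈ ccrSet GW := by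
          rw [← map_sub, hvw, tensorAlgebraMap_ccr, ← hG v w]
          exact ⟨f v, f w, rfl⟩
        exact RingQuot.mkAlgHom_rel ℂ this
    have hψrel : ∀ ⦃a b : TensorAlgebra ℂ W⦄, relJ GW a b →
        (RingQuot.mkAlgHom ℂ (relI GV f)).comp Tg a
          = (RingQuot.mkAlgHom ℂ (relI GV f)).comp Tg b := by
      intro a b hab
      rcases hab with ⟨w, w', hww'⟩
      have : Tg a - Tg b ∈ genSetI GV f := by
        rw [← map_sub, hww', tensorAlgebraMap_ccr]
        have hc : GW w w' = GV (g w) (g w') := by rw [← hG (g w) (g w'), hgf, hgf]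
        rw [hc]
        exact Or.inr ⟨g w, g w', rfl⟩
      exact RingQuot.mkAlgHom_rel ℂ this
    set φ : RingQuot (relI GV f) →ₐ[ℂ] RingQuot (relJ GW) :=
      RingQuot.liftAlgHom ℂ ⟨(RingQuot.mkAlgHom ℂ (relJ GW)).comp Tf, hφrel⟩ with hφ
    set ψ : RingQuot (relJ GW) →ₐ[ℂ] RingQuot (relI GV f) :=
      RingQuot.liftAlgHom ℂ ⟨(RingQuot.mkAlgHom ℂ (relI GV f)).comp Tg, hψrel⟩ with hψ
    have hφmk : ∀ x, φ (RingQuot.mkAlgHom ℂ (relI GV f) x)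
        = RingQuot.mkAlgHom ℂ (relJ GW) (Tf x) := fun x =>
      RingQuot.liftAlgHom_mkAlgHom_apply ℂ _ hφrel x
    have hψmk : ∀ y, ψ (RingQuot.mkAlgHom ℂ (relJ GW) y)
        = RingQuot.mkAlgHom ℂ (relI GV f) (Tg y) := fun y =>
      RingQuot.liftAlgHom_mkAlgHom_apply ℂ _ hψrel y
    have h₁ : φ.comp ψ = AlgHom.id ℂ (RingQuot (relJ GW)) := by
      apply RingQuot.ringQuot_ext'
      apply TensorAlgebra.hom_ext
      apply LinearMap.ext
      intro w
      simp only [AlgHom.comp_toLinearMap, LinearMap.coe_comp, Function.comp_apply,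
        AlgHom.toLinearMap_apply, AlgHom.comp_apply]
      rw [hψmk, tensorAlgebraMap_ι, hφmk, tensorAlgebraMap_ι, hgf]
      rfl
    have h₂ : ψ.comp φ = AlgHom.id ℂ (RingQuot (relI GV f)) := by
      apply RingQuot.ringQuot_ext'
      apply TensorAlgebra.hom_ext
      apply LinearMap.ext
      intro v
      simp only [AlgHom.comp_toLinearMap, LinearMap.coe_comp, Function.comp_apply,
        AlgHom.toLinearMap_apply, AlgHom.comp_apply]
      rw [hφmk, tensorAlgebraMap_ι, hψmk, tensorAlgebraMap_ι]
      simp only [AlgHom.coe_id, id_eq]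
      have hrel : relI GV f (TensorAlgebra.ι ℂ (g (f v))) (TensorAlgebra.ι ℂ v) := by
        show TensorAlgebra.ι ℂ (g (f v)) - TensorAlgebra.ι ℂ v ∈ genSetI GV f
        refine Or.inl ⟨g (f v) - v, ?_, map_sub _ _ _⟩
        rw [SetLike.mem_coe, LinearMap.mem_ker, map_sub, hgf, sub_self]
      exact RingQuot.mkAlgHom_rel ℂ hrel
    exact ⟨AlgEquiv.ofAlgHom φ ψ h₁ h₂, fun x => hφmk x⟩
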